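/- Let ε, M, L > 0. Suppose f : [β,γ] × Xⁿ → X is continuous, ‖f(t,u₁,…,uₙ)‖ ≤ M for all t ∈ [β,γ] and all u₁,…,uₙ ∈ I(φ,ε), and f satisfies the Lipschitz condition ‖f(t,u₁,…,uₙ) − f(t,v₁,…,vₙ)‖ ≤ L·Σ_{i=1}^{n} ‖u_i − v_i‖ for all t ∈ [β,γ] and all u₁,…,uₙ,v₁,…,vₙ ∈ I(φ,ε). Set δ = min{γ − β, ε/M} and ζ = β + δ. Then there exists exactly one function x : [α,ζ] → X such that: x is continuous on [α,ζ]; x(t) = φ(t) for all t ∈ [α,β]; ‖x(t) − φ(β)‖ ≤ ε for all t ∈ [β,ζ]; and x is differentiable on [β,ζ] with x′(t) = f(t, x(τ₁(t)), x(τ₂(t)), …, x(τₙ(t))) for all t ∈ [β,ζ]. -/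

import Mathlib

open Set

namespace PLDelay

open MeasureTheory Function

/-- All the data and hypotheses of the delay Picard–Lindelöf theorem, bundled. -/
structure Setup (X : Type*) [NormedAddCommGroup X] [NormedSpace ℝ X] where
  n : ℕ
  α : ℝ
  β : ℝ
  γ : ℝ
  ζ : ℝ
  ε : ℝ
  M : ℝ
  L : ℝ
  hαβ : α ≤ β
  hβζ : β < ζ
  hζγ : ζ ≤ γ
  hε : 0 < ε
  hM : 0 < M
  hL : 0 < L
  hMδ : M * (ζ - β) ≤ ε
  τ : Fin n → ℝ → ℝ
  hτc : ∀ i, ContinuousOn (τ i) (Icc β γ)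
  hτ : ∀ i, ∀ t ∈ Icc β γ, α ≤ τ i t ∧ τ i t ≤ t
  φ : ℝ → X
  hφ : ContinuousOn φ (Icc α β)
  f : ℝ → (Fin n → X) → X
  hfc : ContinuousOn (fun p : ℝ × (Fin n → X) => f p.1 p.2)
    (Icc β γ ×ˢ (univ : Set (Fin n → X)))
  hfb : ∀ t ∈ Icc β γ, ∀ u : Fin n → X,
    (∀ i, ∃ s ∈ Icc α β, ‖u i - φ s‖ ≤ ε) → ‖f t u‖ ≤ M
  hfl : ∀ t ∈ Icc β γ, ∀ u v : Fin n → X,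
    (∀ i, ∃ s ∈ Icc α β, ‖u i - φ s‖ ≤ ε) →
    (∀ i, ∃ s ∈ Icc α β, ‖v i - φ s‖ ≤ ε) →
    ‖f t u - f t v‖ ≤ L * ∑ i, ‖u i - v i‖

namespace Setup

variable {X : Type*} [NormedAddCommGroup X] [NormedSpace ℝ X] (P : Setup X)

lemma hαζ : P.α ≤ P.ζ := P.hαβ.trans P.hβζ.le

lemma hIcc : Icc P.β P.ζ ⊆ Icc P.β P.γ := Icc_subset_Icc le_rfl P.hζγ

lemma hIcc' : Icc P.β P.ζ ⊆ Icc P.α P.ζ := Icc_subset_Icc P.hαβ le_rfl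

/-- Projection of `ℝ` onto `[α, ζ]`. -/
noncomputable def prj : ℝ → Icc P.α P.ζ := projIcc P.α P.ζ P.hαζ

lemma τ_mem {i : Fin P.n} {s : ℝ} (hs : s ∈ Icc P.β P.ζ) : P.τ i s ∈ Icc P.α P.ζ :=
  ⟨(P.hτ i s (P.hIcc hs)).1, ((P.hτ i s (P.hIcc hs)).2).trans hs.2⟩

/-- The invariant set of the Picard operator: continuous maps that agree with `φ` on `[α, β]`
and stay in the `ε`-tube around `φ β` on `[β, ζ]`. -/
def S : Set C(Icc P.α P.ζ, X) :=
  {x | (∀ t : Icc P.α P.ζ, (t : ℝ) ≤ P.β → x t = P.φ ↑t) ∧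
       ∀ t : Icc P.α P.ζ, P.β ≤ (t : ℝ) → ‖x t - P.φ P.β‖ ≤ P.ε}

lemma isClosed_S : IsClosed P.S := by
  have h1 : IsClosed {x : C(Icc P.α P.ζ, X) |
      ∀ t : Icc P.α P.ζ, (t : ℝ) ≤ P.β → x t = P.φ ↑t} := by
    have he : {x : C(Icc P.α P.ζ, X) | ∀ t : Icc P.α P.ζ, (t : ℝ) ≤ P.β → x t = P.φ ↑t}
        = ⋂ (t : Icc P.α P.ζ) (_ : (t : ℝ) ≤ P.β), {x : C(Icc P.α P.ζ, X) | x t = P.φ ↑t} := by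
      ext x; simp [Set.mem_iInter]
    rw [he]
    exact isClosed_iInter fun t => isClosed_iInter fun _ =>
      isClosed_eq (continuous_eval_const t) continuous_const
  have h2 : IsClosed {x : C(Icc P.α P.ζ, X) |
      ∀ t : Icc P.α P.ζ, P.β ≤ (t : ℝ) → ‖x t - P.φ P.β‖ ≤ P.ε} := by
    have he : {x : C(Icc P.α P.ζ, X) | ∀ t : Icc P.α P.ζ, P.β ≤ (t : ℝ) → ‖x t - P.φ P.β‖ ≤ P.ε}
        = ⋂ (t : Icc P.α P.ζ) (_ : P.β ≤ (t : ℝ)),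
            {x : C(Icc P.α P.ζ, X) | ‖x t - P.φ P.β‖ ≤ P.ε} := by
      ext x; simp [Set.mem_iInter]
    rw [he]
    refine isClosed_iInter fun t => isClosed_iInter fun _ => ?_
    exact isClosed_le (Continuous.norm
      ((continuous_eval_const t).sub continuous_const)) continuous_const
  exact h1.inter h2

lemma continuousOn_φmin : ContinuousOn (fun t : ℝ => P.φ (min t P.β)) (Icc P.α P.ζ) :=
  P.hφ.comp ((continuous_id.min continuous_const).continuousOn)
    fun t ht => ⟨le_min ht.1 P.hαβ, min_le_right _ _⟩

lemma nonempty_S : P.S.Nonempty := by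
  refine ⟨⟨(Icc P.α P.ζ).restrict (fun t => P.φ (min t P.β)),
    P.continuousOn_φmin.restrict⟩, ?_, ?_⟩
  · intro t ht
    show P.φ (min (t : ℝ) P.β) = P.φ ↑t
    rw [min_eq_left ht]
  · intro t ht
    show ‖P.φ (min (t : ℝ) P.β) - P.φ P.β‖ ≤ P.ε
    rw [min_eq_right ht, sub_self, norm_zero]
    exact P.hε.le

/-- The delayed argument of the Picard operator. -/
noncomputable def uu (x : C(Icc P.α P.ζ, X)) (s : ℝ) : Fin P.n → X :=
  fun i => x (P.prj (P.τ i s))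

/-- The integrand of the Picard operator. -/
noncomputable def gg (x : C(Icc P.α P.ζ, X)) (s : ℝ) : X := P.f s (P.uu x s)

lemma tube {x : C(Icc P.α P.ζ, X)} (hx : x ∈ P.S) {s : ℝ} (hs : s ∈ Icc P.β P.ζ) :
    ∀ i, ∃ r ∈ Icc P.α P.β, ‖P.uu x s i - P.φ r‖ ≤ P.ε := by
  intro i
  have hm : P.τ i s ∈ Icc P.α P.ζ := P.τ_mem hs
  have hprj : P.prj (P.τ i s) = ⟨P.τ i s, hm⟩ := projIcc_of_mem _ hm
  rcases le_total (P.τ i s) P.β with h | h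
  · refine ⟨P.τ i s, ⟨hm.1, h⟩, ?_⟩
    have hval : x (P.prj (P.τ i s)) = P.φ (P.τ i s) := by
      rw [hprj]; exact hx.1 ⟨P.τ i s, hm⟩ h
    simp only [uu, hval, sub_self, norm_zero]
    exact P.hε.le
  · refine ⟨P.β, ⟨P.hαβ, le_rfl⟩, ?_⟩
    have := hx.2 ⟨P.τ i s, hm⟩ h
    simpa only [uu, hprj] using this

lemma continuousOn_comp {y : ℝ → X} (hyc : ContinuousOn y (Icc P.α P.ζ)) :
    ContinuousOn (fun s => P.f s (fun i => y (P.τ i s))) (Icc P.β P.ζ) := by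
  have hu : ContinuousOn (fun s => (fun i => y (P.τ i s))) (Icc P.β P.ζ) :=
    continuousOn_pi.2 fun i =>
      hyc.comp ((P.hτc i).mono P.hIcc) fun s hs => P.τ_mem hs
  have hp : ContinuousOn (fun s : ℝ => ((s, fun i => y (P.τ i s)) : ℝ × (Fin P.n → X)))
      (Icc P.β P.ζ) := continuousOn_id.prodMk hu
  exact P.hfc.comp hp fun s hs => ⟨P.hIcc hs, mem_univ _⟩

lemma continuousOn_gg (x : C(Icc P.α P.ζ, X)) : ContinuousOn (P.gg x) (Icc P.β P.ζ) :=
  P.continuousOn_comp ((x.continuous.comp continuous_projIcc).continuousOn)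

lemma norm_gg_le {x : C(Icc P.α P.ζ, X)} (hx : x ∈ P.S) {s : ℝ} (hs : s ∈ Icc P.β P.ζ) :
    ‖P.gg x s‖ ≤ P.M :=
  P.hfb s (P.hIcc hs) _ (P.tube hx hs)

lemma gg_sub_le {x y : C(Icc P.α P.ζ, X)} (hx : x ∈ P.S) (hy : y ∈ P.S) {s : ℝ}
    (hs : s ∈ Icc P.β P.ζ) :
    ‖P.gg x s - P.gg y s‖ ≤ P.L * ∑ i, ‖x (P.prj (P.τ i s)) - y (P.prj (P.τ i s))‖ :=
  P.hfl s (P.hIcc hs) _ _ (P.tube hx hs) (P.tube hy hs)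

lemma intInt (x : C(Icc P.α P.ζ, X)) {a b : ℝ} (ha : a ∈ Icc P.β P.ζ) (hb : b ∈ Icc P.β P.ζ) :
    IntervalIntegrable (P.gg x) volume a b :=
  ((P.continuousOn_gg x).mono (uIcc_subset_Icc ha hb)).intervalIntegrable

/-- The Picard operator, as a map on raw functions. -/
noncomputable def pic (x : C(Icc P.α P.ζ, X)) : ℝ → X :=
  fun t => P.φ (min t P.β) + ∫ s in P.β..(max t P.β), P.gg x s

lemma continuousOn_pic (x : C(Icc P.α P.ζ, X)) : ContinuousOn (P.pic x) (Icc P.α P.ζ) := by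
  apply ContinuousOn.add P.continuousOn_φmin
  have hprim : ContinuousOn (fun r => ∫ s in P.β..r, P.gg x s) (Icc P.β P.ζ) := by
    have h := intervalIntegral.continuousOn_primitive_interval'
      (P.intInt x ⟨le_rfl, P.hβζ.le⟩ ⟨P.hβζ.le, le_rfl⟩) left_mem_uIcc
    rwa [uIcc_of_le P.hβζ.le] at h
  exact hprim.comp ((continuous_id.max continuous_const).continuousOn)
    fun t ht => ⟨le_max_right _ _, max_le ht.2 P.hβζ.le⟩

lemma pic_eq_φ (x : C(Icc P.α P.ζ, X)) {t : ℝ} (ht : t ≤ P.β) : P.pic x t = P.φ t := by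
  rw [pic, min_eq_left ht, max_eq_right ht, intervalIntegral.integral_same, add_zero]

lemma pic_tube {x : C(Icc P.α P.ζ, X)} (hx : x ∈ P.S) {t : ℝ} (ht : t ∈ Icc P.β P.ζ) :
    ‖P.pic x t - P.φ P.β‖ ≤ P.ε := by
  rw [pic, min_eq_right ht.1, max_eq_left ht.1, add_sub_cancel_left]
  have h1 : ‖∫ s in P.β..t, P.gg x s‖ ≤ P.M * |t - P.β| := by
    apply intervalIntegral.norm_integral_le_of_norm_le_const
    intro s hs
    rw [uIoc_of_le ht.1] at hs
    exact P.norm_gg_le hx ⟨hs.1.le, hs.2.trans ht.2⟩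
  refine h1.trans ?_
  rw [abs_of_nonneg (sub_nonneg.2 ht.1)]
  calc P.M * (t - P.β) ≤ P.M * (P.ζ - P.β) := by
        apply mul_le_mul_of_nonneg_left _ P.hM.le
        linarith [ht.2]
    _ ≤ P.ε := P.hMδ

/-- The Picard operator as a self-map of the invariant set `S`. -/
noncomputable def next (x : ↥P.S) : ↥P.S :=
  ⟨⟨(Icc P.α P.ζ).restrict (P.pic ↑x), (P.continuousOn_pic ↑x).restrict⟩, by
    constructor
    · intro t ht
      exact P.pic_eq_φ ↑x ht
    · intro t ht
      exact P.pic_tube x.2 ⟨ht, t.2.2⟩⟩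

lemma next_apply (x : ↥P.S) (t : Icc P.α P.ζ) : (P.next x).1 t = P.pic ↑x ↑t := rfl

/-- The key factorial estimate for iterates of the Picard operator. -/
lemma iter_bound (k : ℕ) (x y : ↥P.S) (t : Icc P.α P.ζ) :
    ‖(P.next^[k] x).1 t - (P.next^[k] y).1 t‖ ≤
      (P.n * P.L) ^ k * max ((t : ℝ) - P.β) 0 ^ k / (k.factorial : ℝ) * dist x y := by
  have hL0 : (0 : ℝ) ≤ P.L := P.hL.le
  have hn0 : (0 : ℝ) ≤ (P.n : ℝ) := Nat.cast_nonneg _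
  induction k generalizing t with
  | zero =>
    simp only [Function.iterate_zero, id_eq, pow_zero, Nat.factorial_zero, Nat.cast_one,
      mul_one, one_mul, div_one]
    rw [← dist_eq_norm]
    calc dist ((x : ↥P.S).1 t) ((y : ↥P.S).1 t) ≤ dist x.1 y.1 :=
          ContinuousMap.dist_apply_le_dist t
      _ = dist x y := (Subtype.dist_eq x y).symm
  | succ k ih =>
    set Xk := P.next^[k] x with hXk
    set Yk := P.next^[k] y with hYk
    rw [Function.iterate_succ_apply', Function.iterate_succ_apply', ← hXk, ← hYk]
    rcases le_total ((t : ℝ)) P.β with ht | ht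
    · have e1 : (P.next Xk).1 t = P.φ ↑t := (P.next Xk).2.1 t ht
      have e2 : (P.next Yk).1 t = P.φ ↑t := (P.next Yk).2.1 t ht
      rw [e1, e2, sub_self, norm_zero]
      positivity
    · have htζ : (t : ℝ) ≤ P.ζ := t.2.2
      have htm : (t : ℝ) ∈ Icc P.β P.ζ := ⟨ht, htζ⟩
      have hmax : max ((t : ℝ) - P.β) 0 = (t : ℝ) - P.β := max_eq_left (by linarith)
      have hfact : ((k.factorial : ℝ)) ≠ 0 := Nat.cast_ne_zero.2 k.factorial_ne_zero
      set d := dist x y with hd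
      have hd0 : 0 ≤ d := dist_nonneg
      set c := P.L * P.n * ((P.n * P.L) ^ k / (k.factorial : ℝ)) * d with hc
      -- the difference is an integral
      have e1 : (P.next Xk).1 t - (P.next Yk).1 t
          = ∫ s in P.β..(t : ℝ), (P.gg ↑Xk s - P.gg ↑Yk s) := by
        rw [P.next_apply, P.next_apply, pic, pic, max_eq_left ht,
          intervalIntegral.integral_sub (P.intInt ↑Xk ⟨le_rfl, P.hβζ.le⟩ htm)
            (P.intInt ↑Yk ⟨le_rfl, P.hβζ.le⟩ htm)]
        abel
      rw [e1]
      -- pointwise bound on the integrand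
      have hB : ∀ s ∈ Icc P.β (t : ℝ), ‖P.gg ↑Xk s - P.gg ↑Yk s‖ ≤ c * (s - P.β) ^ k := by
        intro s hs
        have hsm : s ∈ Icc P.β P.ζ := ⟨hs.1, hs.2.trans htζ⟩
        refine (P.gg_sub_le Xk.2 Yk.2 hsm).trans ?_
        have hsum : ∑ i, ‖Xk.1 (P.prj (P.τ i s)) - Yk.1 (P.prj (P.τ i s))‖ ≤
            (P.n : ℝ) * ((P.n * P.L) ^ k * (s - P.β) ^ k / (k.factorial : ℝ) * d) := by
          have hbd : ∀ i : Fin P.n,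
              ‖Xk.1 (P.prj (P.τ i s)) - Yk.1 (P.prj (P.τ i s))‖ ≤
                (P.n * P.L) ^ k * (s - P.β) ^ k / (k.factorial : ℝ) * d := by
            intro i
            have hm : P.τ i s ∈ Icc P.α P.ζ := P.τ_mem hsm
            have h1 := ih (P.prj (P.τ i s))
            have hco : ((P.prj (P.τ i s) : Icc P.α P.ζ) : ℝ) = P.τ i s := by
              rw [prj, projIcc_of_mem _ hm]
            rw [hco] at h1
            refine h1.trans ?_
            have hmx : max (P.τ i s - P.β) 0 ≤ s - P.β := by
              apply max_le
              · linarith [(P.hτ i s (P.hIcc hsm)).2]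
              · linarith [hs.1]
            have hmx0 : (0 : ℝ) ≤ max (P.τ i s - P.β) 0 := le_max_right _ _
            have hpow : max (P.τ i s - P.β) 0 ^ k ≤ (s - P.β) ^ k :=
              pow_le_pow_left₀ hmx0 hmx k
            have : (P.n * P.L) ^ k * max (P.τ i s - P.β) 0 ^ k / (k.factorial : ℝ)
                ≤ (P.n * P.L) ^ k * (s - P.β) ^ k / (k.factorial : ℝ) := by
              gcongr
            exact mul_le_mul_of_nonneg_right this hd0
          calc ∑ i, ‖Xk.1 (P.prj (P.τ i s)) - Yk.1 (P.prj (P.τ i s))‖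
              ≤ ∑ _i : Fin P.n, ((P.n * P.L) ^ k * (s - P.β) ^ k / (k.factorial : ℝ) * d) :=
                Finset.sum_le_sum fun i _ => hbd i
            _ = (P.n : ℝ) * ((P.n * P.L) ^ k * (s - P.β) ^ k / (k.factorial : ℝ) * d) := by
                rw [Finset.sum_const, Finset.card_univ, Fintype.card_fin, nsmul_eq_mul]
        calc P.L * ∑ i, ‖Xk.1 (P.prj (P.τ i s)) - Yk.1 (P.prj (P.τ i s))‖
            ≤ P.L * ((P.n : ℝ) * ((P.n * P.L) ^ k * (s - P.β) ^ k / (k.factorial : ℝ) * d)) :=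
              mul_le_mul_of_nonneg_left hsum hL0
          _ = c * (s - P.β) ^ k := by rw [hc]; ring
      -- integrate the bound
      have hInt1 : IntervalIntegrable (fun s => ‖P.gg ↑Xk s - P.gg ↑Yk s‖) volume P.β (t : ℝ) := by
        apply ContinuousOn.intervalIntegrable
        apply ContinuousOn.norm
        apply ContinuousOn.sub ((P.continuousOn_gg ↑Xk).mono ?_) ((P.continuousOn_gg ↑Yk).mono ?_)
        · exact uIcc_subset_Icc ⟨le_rfl, P.hβζ.le⟩ htm
        · exact uIcc_subset_Icc ⟨le_rfl, P.hβζ.le⟩ htm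
      have hInt2 : IntervalIntegrable (fun s => c * (s - P.β) ^ k) volume P.β (t : ℝ) := by
        apply Continuous.intervalIntegrable
        continuity
      have hval : (∫ s in P.β..(t : ℝ), c * (s - P.β) ^ k)
          = c * (((t : ℝ) - P.β) ^ (k + 1) / ((k : ℝ) + 1)) := by
        rw [intervalIntegral.integral_const_mul]
        congr 1
        have h2 : (∫ s in P.β..(t : ℝ), (s - P.β) ^ k)
            = ∫ s in (P.β - P.β)..((t : ℝ) - P.β), s ^ k := by
          exact intervalIntegral.integral_comp_sub_right (fun u => u ^ k) P.β
        rw [h2, integral_pow, sub_self, zero_pow (Nat.succ_ne_zero k), sub_zero]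
        try push_cast
        try ring
      calc ‖∫ s in P.β..(t : ℝ), (P.gg ↑Xk s - P.gg ↑Yk s)‖
          ≤ ∫ s in P.β..(t : ℝ), ‖P.gg ↑Xk s - P.gg ↑Yk s‖ :=
            intervalIntegral.norm_integral_le_integral_norm ht
        _ ≤ ∫ s in P.β..(t : ℝ), c * (s - P.β) ^ k :=
            intervalIntegral.integral_mono_on ht hInt1 hInt2 hB
        _ = c * (((t : ℝ) - P.β) ^ (k + 1) / ((k : ℝ) + 1)) := hval
        _ = (P.n * P.L) ^ (k + 1) * max ((t : ℝ) - P.β) 0 ^ (k + 1)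
              / ((k + 1).factorial : ℝ) * d := by
            rw [hmax, hc]
            have hfs : (((k + 1).factorial : ℝ)) = ((k : ℝ) + 1) * (k.factorial : ℝ) := by
              rw [Nat.factorial_succ]; push_cast; ring
            rw [hfs]
            have hk1 : ((k : ℝ) + 1) ≠ 0 := by positivity
            field_simp
            ring

lemma lipschitz_iter (k : ℕ) :
    LipschitzWith (Real.toNNReal ((P.n * P.L) ^ k * (P.ζ - P.β) ^ k / (k.factorial : ℝ)))
      (P.next^[k]) := by
  have hζβ : (0 : ℝ) ≤ P.ζ - P.β := by linarith [P.hβζ.le]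
  have hnL : (0 : ℝ) ≤ (P.n : ℝ) * P.L := mul_nonneg (Nat.cast_nonneg _) P.hL.le
  have h0 : (0 : ℝ) ≤ (P.n * P.L) ^ k * (P.ζ - P.β) ^ k / (k.factorial : ℝ) :=
    div_nonneg (mul_nonneg (pow_nonneg hnL k) (pow_nonneg hζβ k)) (Nat.cast_nonneg _)
  apply LipschitzWith.of_dist_le_mul
  intro x y
  rw [Real.coe_toNNReal _ h0]
  have hC0 : (0 : ℝ) ≤ (P.n * P.L) ^ k * (P.ζ - P.β) ^ k / (k.factorial : ℝ) * dist x y :=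
    mul_nonneg h0 dist_nonneg
  rw [Subtype.dist_eq]
  rw [ContinuousMap.dist_le hC0]
  intro t
  rw [dist_eq_norm]
  refine (P.iter_bound k x y t).trans ?_
  have hmx : max ((t : ℝ) - P.β) 0 ≤ P.ζ - P.β := by
    apply max_le _ hζβ
    linarith [t.2.2]
  have hmx0 : (0 : ℝ) ≤ max ((t : ℝ) - P.β) 0 := le_max_right _ _
  have hpow : max ((t : ℝ) - P.β) 0 ^ k ≤ (P.ζ - P.β) ^ k := pow_le_pow_left₀ hmx0 hmx k
  have : (P.n * P.L) ^ k * max ((t : ℝ) - P.β) 0 ^ k / (k.factorial : ℝ)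
      ≤ (P.n * P.L) ^ k * (P.ζ - P.β) ^ k / (k.factorial : ℝ) := by
    gcongr
  exact mul_le_mul_of_nonneg_right this dist_nonneg

/-- Existence and uniqueness of the fixed point of the Picard operator. -/
lemma exists_fixed [CompleteSpace X] :
    ∃ x : ↥P.S, Function.IsFixedPt P.next x ∧
      ∀ y : ↥P.S, Function.IsFixedPt P.next y → y = x := by
  haveI : CompleteSpace ↥P.S := P.isClosed_S.completeSpace_coe
  haveI : Nonempty ↥P.S := P.nonempty_S.to_subtype
  obtain ⟨k, hk⟩ : ∃ k : ℕ, (P.n * P.L) ^ k * (P.ζ - P.β) ^ k / (k.factorial : ℝ) < 1 := by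
    have h := FloorSemiring.tendsto_pow_div_factorial_atTop (P.n * P.L * (P.ζ - P.β))
    have h2 := h.eventually (gt_mem_nhds (by norm_num : (0 : ℝ) < 1))
    obtain ⟨k, hk⟩ := h2.exists
    refine ⟨k, ?_⟩
    have : (P.n * P.L * (P.ζ - P.β)) ^ k = (P.n * P.L) ^ k * (P.ζ - P.β) ^ k := mul_pow _ _ _
    rw [← this]
    exact hk
  have hc : ContractingWith
      (Real.toNNReal ((P.n * P.L) ^ k * (P.ζ - P.β) ^ k / (k.factorial : ℝ)))
      (P.next^[k]) := by
    constructor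
    · have hζβ : (0 : ℝ) ≤ P.ζ - P.β := by linarith [P.hβζ.le]
      have hnL : (0 : ℝ) ≤ (P.n : ℝ) * P.L := mul_nonneg (Nat.cast_nonneg _) P.hL.le
      have h0 : (0 : ℝ) ≤ (P.n * P.L) ^ k * (P.ζ - P.β) ^ k / (k.factorial : ℝ) :=
        div_nonneg (mul_nonneg (pow_nonneg hnL k) (pow_nonneg hζβ k)) (Nat.cast_nonneg _)
      rw [← NNReal.coe_lt_coe, Real.coe_toNNReal _ h0, NNReal.coe_one]
      exact hk
    · exact P.lipschitz_iter k
  set fix := ContractingWith.fixedPoint (P.next^[k]) hc with hfixdef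
  have hfixk : Function.IsFixedPt (P.next^[k]) fix := hc.fixedPoint_isFixedPt
  have hfix : Function.IsFixedPt P.next fix := by
    have h1 : Function.IsFixedPt (P.next^[k]) (P.next fix) := by
      show (P.next^[k]) (P.next fix) = P.next fix
      calc (P.next^[k]) (P.next fix) = P.next^[k + 1] fix :=
            (Function.iterate_succ_apply _ _ _).symm
        _ = P.next ((P.next^[k]) fix) := Function.iterate_succ_apply' _ _ _
        _ = P.next fix := by rw [hfixk]
    exact hc.fixedPoint_unique' h1 hfixk
  exact ⟨fix, hfix, fun y hy => hc.fixedPoint_unique' (hy.iterate k) hfixk⟩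

/-- The solution, extended to all of `ℝ` by projection onto `[α, ζ]`. -/
noncomputable def sol (x : ↥P.S) : ℝ → X := fun t => x.1 (P.prj t)

lemma sol_continuousOn (x : ↥P.S) : ContinuousOn (P.sol x) (Icc P.α P.ζ) :=
  (x.1.continuous.comp continuous_projIcc).continuousOn

lemma sol_apply (x : ↥P.S) {t : ℝ} (ht : t ∈ Icc P.α P.ζ) : P.sol x t = x.1 ⟨t, ht⟩ := by
  rw [sol, prj, projIcc_of_mem _ ht]

lemma sol_eq_φ (x : ↥P.S) {t : ℝ} (ht : t ∈ Icc P.α P.β) : P.sol x t = P.φ t := by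
  have hm : t ∈ Icc P.α P.ζ := ⟨ht.1, ht.2.trans P.hβζ.le⟩
  rw [P.sol_apply x hm]
  exact x.2.1 ⟨t, hm⟩ ht.2

lemma sol_tube (x : ↥P.S) {t : ℝ} (ht : t ∈ Icc P.β P.ζ) : ‖P.sol x t - P.φ P.β‖ ≤ P.ε := by
  have hm : t ∈ Icc P.α P.ζ := P.hIcc' ht
  rw [P.sol_apply x hm]
  exact x.2.2 ⟨t, hm⟩ ht.1

lemma sol_delay (x : ↥P.S) (t : ℝ) : (fun i => P.sol x (P.τ i t)) = P.uu x.1 t := rfl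

/-- A fixed point of the Picard operator satisfies the integral equation. -/
lemma fix_integral_eq {x : ↥P.S} (hx : Function.IsFixedPt P.next x) {t : ℝ}
    (ht : t ∈ Icc P.β P.ζ) :
    P.sol x t = P.φ P.β + ∫ s in P.β..t, P.gg x.1 s := by
  have hm : t ∈ Icc P.α P.ζ := P.hIcc' ht
  have h1 : x.1 ⟨t, hm⟩ = P.pic x.1 t := by
    conv_lhs => rw [← hx]
    rfl
  rw [P.sol_apply x hm, h1, pic, min_eq_right ht.1, max_eq_left ht.1]

/-- A fixed point of the Picard operator solves the delay differential equation. -/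
lemma sol_hasDeriv [CompleteSpace X] {x : ↥P.S} (hx : Function.IsFixedPt P.next x) {t : ℝ}
    (ht : t ∈ Icc P.β P.ζ) :
    HasDerivWithinAt (P.sol x) (P.f t (fun i => P.sol x (P.τ i t))) (Icc P.β P.ζ) t := by
  haveI : Fact (t ∈ Icc P.β P.ζ) := ⟨ht⟩
  have hg := P.continuousOn_gg x.1
  have hFTC : HasDerivWithinAt (fun r => ∫ s in P.β..r, P.gg x.1 s) (P.gg x.1 t)
      (Icc P.β P.ζ) t :=
    intervalIntegral.integral_hasDerivWithinAt_right (P.intInt x.1 ⟨le_rfl, P.hβζ.le⟩ ht)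
      (hg.stronglyMeasurableAtFilter_nhdsWithin measurableSet_Icc t)
      (hg t ht)
  have h2 : HasDerivWithinAt (fun r => P.φ P.β + ∫ s in P.β..r, P.gg x.1 s) (P.gg x.1 t)
      (Icc P.β P.ζ) t := hFTC.const_add _
  have h3 : HasDerivWithinAt (P.sol x) (P.gg x.1 t) (Icc P.β P.ζ) t :=
    h2.congr (fun s hs => P.fix_integral_eq hx hs) (P.fix_integral_eq hx ht)
  have h4 : P.gg x.1 t = P.f t (fun i => P.sol x (P.τ i t)) := rfl
  rwa [h4] at h3

/-- Any solution of the delay differential equation satisfies the integral equation. -/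
lemma solution_integral_eq [CompleteSpace X] {y : ℝ → X}
    (hyc : ContinuousOn y (Icc P.α P.ζ))
    (hyd : ∀ t ∈ Icc P.β P.ζ,
      HasDerivWithinAt y (P.f t (fun i => y (P.τ i t))) (Icc P.β P.ζ) t)
    {t : ℝ} (ht : t ∈ Icc P.β P.ζ) :
    ∫ s in P.β..t, P.f s (fun i => y (P.τ i s)) = y t - y P.β := by
  apply intervalIntegral.integral_eq_sub_of_hasDeriv_right_of_le ht.1
  · exact hyc.mono (Icc_subset_Icc P.hαβ ht.2)
  · intro s hs
    have hsm : s ∈ Icc P.β P.ζ := ⟨hs.1.le, hs.2.le.trans ht.2⟩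
    refine (hyd s hsm).mono_of_mem_nhdsWithin ?_
    exact Icc_mem_nhdsGT_of_mem ⟨hs.1.le, hs.2.trans_le ht.2⟩
  · exact ((P.continuousOn_comp hyc).mono
      (uIcc_subset_Icc ⟨le_rfl, P.hβζ.le⟩ ht)).intervalIntegrable

/-- Any solution of the delay differential equation gives a fixed point of the Picard
operator. -/
lemma solution_fixed [CompleteSpace X] {y : ℝ → X}
    (hyc : ContinuousOn y (Icc P.α P.ζ))
    (hyφ : ∀ t ∈ Icc P.α P.β, y t = P.φ t)
    (hyt : ∀ t ∈ Icc P.β P.ζ, ‖y t - P.φ P.β‖ ≤ P.ε)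
    (hyd : ∀ t ∈ Icc P.β P.ζ,
      HasDerivWithinAt y (P.f t (fun i => y (P.τ i t))) (Icc P.β P.ζ) t) :
    ∃ Y : ↥P.S, Function.IsFixedPt P.next Y ∧ ∀ t : Icc P.α P.ζ, Y.1 t = y ↑t := by
  have hYm : (⟨(Icc P.α P.ζ).restrict y, hyc.restrict⟩ : C(Icc P.α P.ζ, X)) ∈ P.S := by
    constructor
    · intro t ht
      exact hyφ ↑t ⟨t.2.1, ht⟩
    · intro t ht
      exact hyt ↑t ⟨ht, t.2.2⟩
  refine ⟨⟨_, hYm⟩, ?_, fun t => rfl⟩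
  apply Subtype.ext
  apply ContinuousMap.ext
  intro t
  show P.pic _ ↑t = y ↑t
  rcases le_total ((t : ℝ)) P.β with ht | ht
  · rw [P.pic_eq_φ _ ht]
    exact (hyφ ↑t ⟨t.2.1, ht⟩).symm
  · have htm : (t : ℝ) ∈ Icc P.β P.ζ := ⟨ht, t.2.2⟩
    have hgg : EqOn (P.gg (⟨(Icc P.α P.ζ).restrict y, hyc.restrict⟩ : C(Icc P.α P.ζ, X)))
        (fun s => P.f s (fun i => y (P.τ i s))) (uIcc P.β (t : ℝ)) := by
      intro s hs
      rw [uIcc_of_le ht] at hs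
      have hsm : s ∈ Icc P.β P.ζ := ⟨hs.1, hs.2.trans t.2.2⟩
      have harg : ∀ i, (⟨(Icc P.α P.ζ).restrict y, hyc.restrict⟩ : C(Icc P.α P.ζ, X))
          (P.prj (P.τ i s)) = y (P.τ i s) := by
        intro i
        rw [prj, projIcc_of_mem _ (P.τ_mem hsm)]
        rfl
      show P.f s (P.uu _ s) = _
      have : P.uu (⟨(Icc P.α P.ζ).restrict y, hyc.restrict⟩ : C(Icc P.α P.ζ, X)) s
          = fun i => y (P.τ i s) := funext harg
      rw [this]
    rw [pic, min_eq_right ht, max_eq_left ht, intervalIntegral.integral_congr hgg,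
      P.solution_integral_eq hyc hyd htm, hyφ P.β ⟨P.hαβ, le_rfl⟩]
    abel

end Setup
end PLDelay

/-- Picard–Lindelöf theorem for a system of delay differential equations
(continuous-time instance of the paper's nonlinear delay dynamic equation). -/
theorem picard_lindelof_delay
    {X : Type*} [NormedAddCommGroup X] [NormedSpace ℝ X] [CompleteSpace X]
    {n : ℕ} (hn : 0 < n)
    {α β γ : ℝ} (hαβ : α ≤ β) (hβγ : β < γ)
    (τ : Fin n → ℝ → ℝ)
    (hτc : ∀ i, ContinuousOn (τ i) (Icc β γ))
    (hτ : ∀ i, ∀ t ∈ Icc β γ, α ≤ τ i t ∧ τ i t ≤ t)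
    (φ : ℝ → X) (hφ : ContinuousOn φ (Icc α β))
    {ε M L : ℝ} (hε : 0 < ε) (hM : 0 < M) (hL : 0 < L)
    (f : ℝ → (Fin n → X) → X)
    (hfc : ContinuousOn (fun p : ℝ × (Fin n → X) => f p.1 p.2)
      (Icc β γ ×ˢ (univ : Set (Fin n → X))))
    (hfb : ∀ t ∈ Icc β γ, ∀ u : Fin n → X,
      (∀ i, ∃ s ∈ Icc α β, ‖u i - φ s‖ ≤ ε) → ‖f t u‖ ≤ M)
    (hfl : ∀ t ∈ Icc β γ, ∀ u v : Fin n → X,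
      (∀ i, ∃ s ∈ Icc α β, ‖u i - φ s‖ ≤ ε) →
      (∀ i, ∃ s ∈ Icc α β, ‖v i - φ s‖ ≤ ε) →
      ‖f t u - f t v‖ ≤ L * ∑ i, ‖u i - v i‖)
    (δ ζ : ℝ) (hδ : δ = min (γ - β) (ε / M)) (hζ : ζ = β + δ) :
    ∃ x : ℝ → X,
      (ContinuousOn x (Icc α ζ) ∧
        (∀ t ∈ Icc α β, x t = φ t) ∧
        (∀ t ∈ Icc β ζ, ‖x t - φ β‖ ≤ ε) ∧
        (∀ t ∈ Icc β ζ,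
          HasDerivWithinAt x (f t (fun i => x (τ i t))) (Icc β ζ) t)) ∧
      ∀ y : ℝ → X,
        (ContinuousOn y (Icc α ζ) ∧
          (∀ t ∈ Icc α β, y t = φ t) ∧
          (∀ t ∈ Icc β ζ, ‖y t - φ β‖ ≤ ε) ∧
          (∀ t ∈ Icc β ζ,
            HasDerivWithinAt y (f t (fun i => y (τ i t))) (Icc β ζ) t)) →
        EqOn y x (Icc α ζ) := by
  have hδ0 : 0 < δ := by
    rw [hδ]
    exact lt_min (by linarith) (div_pos hε hM)
  have hβζ' : β < ζ := by rw [hζ]; linarith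
  have hζγ' : ζ ≤ γ := by
    have := min_le_left (γ - β) (ε / M)
    rw [hζ, hδ]; linarith
  have hMδ : M * (ζ - β) ≤ ε := by
    have h1 : δ ≤ ε / M := by rw [hδ]; exact min_le_right _ _
    have h2 : ζ - β = δ := by rw [hζ]; ring
    rw [h2]
    calc M * δ ≤ M * (ε / M) := mul_le_mul_of_nonneg_left h1 hM.le
      _ = ε := by field_simp
  let P : PLDelay.Setup X :=
    { n := n, α := α, β := β, γ := γ, ζ := ζ, ε := ε, M := M, L := L,
      hαβ := hαβ, hβζ := hβζ', hζγ := hζγ', hε := hε, hM := hM, hL := hL, hMδ := hMδ,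
      τ := τ, hτc := hτc, hτ := hτ, φ := φ, hφ := hφ, f := f,
      hfc := hfc, hfb := hfb, hfl := hfl }
  obtain ⟨fix, hfix, huniq⟩ := P.exists_fixed
  refine ⟨P.sol fix, ⟨P.sol_continuousOn fix, fun t ht => P.sol_eq_φ fix ht,
    fun t ht => P.sol_tube fix ht, fun t ht => P.sol_hasDeriv hfix ht⟩, ?_⟩
  rintro y ⟨hyc, hyφ, hyt, hyd⟩ t ht
  obtain ⟨Y, hYfix, hYeq⟩ := P.solution_fixed hyc hyφ hyt hyd
  have hYfixeq : Y = fix := huniq Y hYfix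
  have h1 := hYeq ⟨t, ht⟩
  rw [hYfixeq] at h1
  rw [← h1, P.sol_apply fix ht]
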